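/- The function f(x,y) = log(1/|x−y|) is a positive definite kernel on B(0, r_d) × B(0, r_d) ⊂ ℝᵈ × ℝᵈ for some radius r_d > 0; equivalently, for any finite set of points x₁,…,x_n in B(0,r_d) and reals c₁,…,c_n, ∑_{i,j} c_i c_j log(1/|x_i − x_j|) ≥ 0 whenever the points are distinct. In dimension d = 1, one may take r_d = 1/2, since log(1/|x−y|) ≥ 0 there and it agrees with the covariance of an exactly scaling field. -/

import Mathlib

open MeasureTheory Set Function

lemma lem_FTC (a : ℝ) (ha : 0 < a) (ha1 : a ≤ 1) :
    ∫ t in a..1, (t - a) / t ^ 2 = a - Real.log a - 1 := by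
  have h : ∀ t ∈ uIcc a 1, HasDerivAt (fun t => Real.log t + a / t) ((t - a) / t ^ 2) t := by
    intro t ht
    rw [uIcc_of_le ha1] at ht
    have ht0 : t ≠ 0 := by intro h; rw [h] at ht; exact absurd ht.1 (by linarith)
    have h1 : HasDerivAt Real.log t⁻¹ t := Real.hasDerivAt_log ht0
    have h2 : HasDerivAt (fun t => a / t) (a * (-(t ^ 2)⁻¹)) t := by
      simpa [div_eq_mul_inv] using (hasDerivAt_inv ht0).const_mul a
    refine HasDerivAt.congr_deriv (h1.add h2) ?_
    field_simp
    ring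
  have hint : IntervalIntegrable (fun t => (t - a) / t ^ 2) volume a 1 := by
    apply ContinuousOn.intervalIntegrable
    apply ContinuousOn.div (by fun_prop) (by fun_prop)
    intro t ht
    rw [uIcc_of_le ha1] at ht
    have : 0 < t := lt_of_lt_of_le ha ht.1
    positivity
  rw [intervalIntegral.integral_eq_sub_of_hasDerivAt h hint]
  have h2 : a * a⁻¹ = 1 := mul_inv_cancel₀ ha.ne'
  simp
  rw [div_self ha.ne']
  ring

lemma lem_W (u : ℝ) (h0 : u ≠ 0) (h1 : |u| < 1) :
    Real.log (1 / |u|) =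
      (∫ t in Set.Ioo (0:ℝ) 1, max (t - |u|) 0 / t ^ 2) + max (1 - |u|) 0 := by
  set a := |u| with ha_def
  have ha : 0 < a := abs_pos.2 h0
  have key : (∫ t in Set.Ioo (0:ℝ) 1, max (t - a) 0 / t ^ 2) = a - Real.log a - 1 := by
    have e1 : ∀ t ∈ Set.Ioo (0:ℝ) 1, max (t - a) 0 / t ^ 2 =
        Set.indicator (Set.Ioi a) (fun t => (t - a) / t ^ 2) t := by
      intro t ht
      by_cases hta : a < t
      · rw [Set.indicator_of_mem (Set.mem_Ioi.2 hta), max_eq_left (by linarith)]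
      · rw [Set.indicator_of_notMem (by simpa using hta), max_eq_right (by push_neg at hta; linarith)]
        simp
    rw [setIntegral_congr_fun measurableSet_Ioo e1, setIntegral_indicator measurableSet_Ioi]
    have : Set.Ioo (0:ℝ) 1 ∩ Set.Ioi a = Set.Ioo a 1 := by
      ext t; simp only [Set.mem_inter_iff, Set.mem_Ioo, Set.mem_Ioi]
      constructor
      · rintro ⟨⟨_, h2⟩, h3⟩; exact ⟨h3, h2⟩
      · rintro ⟨h2, h3⟩; exact ⟨⟨lt_trans ha h2, h3⟩, h2⟩
    rw [this, ← integral_Ioc_eq_integral_Ioo, ← intervalIntegral.integral_of_le h1.le]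
    exact lem_FTC a ha h1.le
  rw [key, max_eq_left (by linarith), one_div, Real.log_inv]
  ring

lemma lem_Tint (t : ℝ) (ht : 0 ≤ t) : (∫ u : ℝ, max (t - |u|) 0) = t ^ 2 := by
  have e1 : (fun u : ℝ => max (t - |u|) 0) =
      Set.indicator (Set.Icc (-t) t) (fun u => t - |u|) := by
    funext u
    by_cases hu : u ∈ Set.Icc (-t) t
    · rw [Set.indicator_of_mem hu]
      rcases Set.mem_Icc.1 hu with ⟨h1, h2⟩
      rw [max_eq_left]
      rcases abs_cases u with ⟨he, _⟩ | ⟨he, _⟩ <;> linarith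
    · rw [Set.indicator_of_notMem hu]
      rw [Set.mem_Icc, not_and_or] at hu
      rw [max_eq_right]
      rcases abs_cases u with ⟨he, _⟩ | ⟨he, _⟩ <;> push_neg at hu <;>
        rcases hu with h | h <;> linarith [h]
  rw [e1, integral_indicator measurableSet_Icc, integral_Icc_eq_integral_Ioc,
    ← intervalIntegral.integral_of_le (by linarith : -t ≤ t)]
  have h1 : IntervalIntegrable (fun u : ℝ => t - |u|) volume (-t) 0 :=
    (Continuous.sub continuous_const continuous_abs).intervalIntegrable _ _
  have h2 : IntervalIntegrable (fun u : ℝ => t - |u|) volume 0 t :=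
    (Continuous.sub continuous_const continuous_abs).intervalIntegrable _ _
  rw [← intervalIntegral.integral_add_adjacent_intervals h1 h2]
  have e2 : ∫ u in (-t)..0, (t - |u|) = ∫ u in (-t)..0, (t + u) := by
    apply intervalIntegral.integral_congr
    intro u hu
    rw [uIcc_of_le (by linarith : -t ≤ 0)] at hu
    simp only []
    rw [abs_of_nonpos hu.2]; ring
  have e3 : ∫ u in (0:ℝ)..t, (t - |u|) = ∫ u in (0:ℝ)..t, (t - u) := by
    apply intervalIntegral.integral_congr
    intro u hu
    rw [uIcc_of_le ht] at hu
    simp only []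
    rw [abs_of_nonneg hu.1]
  rw [e2, e3]
  have i1 : ∫ u in (-t)..0, (t + u) = t * (0 - (-t)) + (0 ^ 2 - (-t) ^ 2) / 2 := by
    rw [intervalIntegral.integral_add intervalIntegrable_const
      (intervalIntegral.intervalIntegrable_id), intervalIntegral.integral_const,
      integral_id]
    simp
  have i2 : ∫ u in (0:ℝ)..t, (t - u) = t * (t - 0) - (t ^ 2 - 0 ^ 2) / 2 := by
    rw [intervalIntegral.integral_sub intervalIntegrable_const
      (intervalIntegral.intervalIntegrable_id), intervalIntegral.integral_const,
      integral_id]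
    simp
  rw [i1, i2]; ring

lemma lem_Tint' (t x : ℝ) (ht : 0 ≤ t) : (∫ y : ℝ, max (t - |x - y|) 0) = t ^ 2 := by
  rw [integral_sub_left_eq_self (fun u : ℝ => max (t - |u|) 0) volume x]
  exact lem_Tint t ht

lemma lem_chi (h : ℝ) (hh : 0 ≤ h) (x y : ℝ) :
    (∫ s : ℝ, (Set.Icc (x - h) (x + h)).indicator (fun _ => (1:ℝ)) s *
      (Set.Icc (y - h) (y + h)).indicator (fun _ => (1:ℝ)) s) = max (2 * h - |x - y|) 0 := by
  have e1 : (fun s : ℝ => (Set.Icc (x - h) (x + h)).indicator (fun _ => (1:ℝ)) s *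
      (Set.Icc (y - h) (y + h)).indicator (fun _ => (1:ℝ)) s) =
      (Set.Icc (x - h) (x + h) ∩ Set.Icc (y - h) (y + h)).indicator (fun _ => (1:ℝ)) := by
    funext s
    simp only [Set.indicator_apply, Set.mem_inter_iff]
    by_cases h1 : s ∈ Set.Icc (x - h) (x + h) <;> by_cases h2 : s ∈ Set.Icc (y - h) (y + h) <;>
      simp [h1, h2]
  rw [e1, Set.Icc_inter_Icc, integral_indicator_const (1:ℝ)
    ((measurableSet_Icc : MeasurableSet (Set.Icc _ _)))]
  rw [Real.volume_real_Icc, smul_eq_mul, mul_one]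
  congr 1
  rcases le_total x y with hxy | hxy
  · rw [min_eq_left (by linarith), max_eq_right (by linarith), abs_sub_comm,
      abs_of_nonneg (by linarith)]
    ring
  · rw [min_eq_right (by linarith), max_eq_left (by linarith),
      abs_of_nonneg (by linarith)]
    ring

lemma aux_integrable {g : ℝ × ℝ → ℝ} (hm : AEStronglyMeasurable g (volume.prod volume))
    {C a b c d : ℝ}
    (hb : ∀ p : ℝ × ℝ, g p ≠ 0 → p ∈ Set.Icc a b ×ˢ Set.Icc c d)
    (hC : ∀ p, |g p| ≤ C) :
    Integrable g (volume.prod volume) := by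
  have hC0 : 0 ≤ C := le_trans (abs_nonneg _) (hC (0, 0))
  have hmaj : Integrable ((Set.Icc a b ×ˢ Set.Icc c d).indicator (fun _ => C))
      (volume.prod volume) := by
    rw [integrable_indicator_iff (measurableSet_Icc.prod measurableSet_Icc)]
    refine integrableOn_const ?_
    rw [Measure.prod_prod]
    exact (ENNReal.mul_lt_top measure_Icc_lt_top measure_Icc_lt_top).ne
  refine hmaj.mono' hm (Filter.Eventually.of_forall fun p => ?_)
  by_cases hp : g p = 0
  · rw [hp]
    simpa using Set.indicator_nonneg (fun _ _ => hC0) p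
  · rw [Set.indicator_of_mem (hb p hp)]
    exact hC p



lemma lem_step2 (f : ℝ → ℝ) (hf : Continuous f)
    (hsupp : tsupport f ⊆ Metric.ball (0 : ℝ) (1/2))
    (t : ℝ) (ht : 0 < t) (ht1 : t ≤ 1) :
    0 ≤ ∫ x : ℝ, ∫ y : ℝ, f x * f y * max (t - |x - y|) 0 := by
  set h : ℝ := t / 2 with hh_def
  have hh0 : 0 ≤ h := by positivity
  have hh1 : h ≤ 1/2 := by rw [hh_def]; linarith
  -- basic facts about f
  have hcs : HasCompactSupport f := by
    refine Metric.isCompact_of_isClosed_isBounded (isClosed_tsupport f) ?_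
    exact Metric.isBounded_ball.subset hsupp
  have hfint : Integrable f := hf.integrable_of_hasCompactSupport hcs
  obtain ⟨C, hC⟩ := hcs.exists_bound_of_continuous hf
  have hC' : ∀ x, |f x| ≤ C := fun x => by simpa [Real.norm_eq_abs] using hC x
  have hfs : ∀ x, f x ≠ 0 → |x| < 1/2 := by
    intro x hx
    have := hsupp (subset_tsupport f hx)
    simpa [Real.dist_eq] using Metric.mem_ball.1 this
  -- the bump function
  set I : ℝ → ℝ → ℝ := fun a s => (Set.Icc (a - h) (a + h)).indicator (fun _ => (1:ℝ)) s
    with hI_def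
  have hI01 : ∀ a s, 0 ≤ I a s ∧ I a s ≤ 1 := by
    intro a s
    rw [hI_def]
    simp only [Set.indicator_apply]
    split <;> norm_num
  have hIabs : ∀ a s, |I a s| ≤ 1 := fun a s =>
    abs_le.2 ⟨by linarith [(hI01 a s).1], (hI01 a s).2⟩
  have hImem : ∀ a s, I a s ≠ 0 → |s - a| ≤ h := by
    intro a s hne
    by_contra hcon
    apply hne
    rw [hI_def]
    apply Set.indicator_of_notMem
    intro hmem
    rcases Set.mem_Icc.1 hmem with ⟨h1, h2⟩
    exact hcon (abs_le.2 ⟨by linarith, by linarith⟩)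
  have hImeas1 : ∀ a, Measurable (I a) := fun a => measurable_const.indicator measurableSet_Icc
  have hImeas2 : Measurable (fun p : ℝ × ℝ => I p.1 p.2) := by
    have hset : MeasurableSet {p : ℝ × ℝ | |p.2 - p.1| ≤ h} :=
      (isClosed_le (by fun_prop) continuous_const).measurableSet
    have : (fun p : ℝ × ℝ => I p.1 p.2) =
        ({p : ℝ × ℝ | |p.2 - p.1| ≤ h}).indicator (fun _ => (1:ℝ)) := by
      funext p
      rw [hI_def]
      simp only [Set.indicator_apply, Set.mem_Icc, Set.mem_setOf_eq, abs_le]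
      refine if_congr ⟨fun hp => ⟨by linarith [hp.1], by linarith [hp.2]⟩,
        fun hp => ⟨by linarith [hp.1], by linarith [hp.2]⟩⟩ rfl rfl
    rw [this]
    exact measurable_const.indicator hset
  -- the smoothed function B
  set B : ℝ → ℝ := fun s => ∫ y, f y * I y s with hB_def
  have hBeq : ∀ s, B s = (∫ u in (0:ℝ)..(s + h), f u) - ∫ u in (0:ℝ)..(s - h), f u := by
    intro s
    have e1 : (fun y => f y * I y s) = (Set.Icc (s - h) (s + h)).indicator f := by
      funext y
      rw [hI_def]
      simp only [Set.indicator_apply, Set.mem_Icc]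
      by_cases hmem : s - h ≤ y ∧ y ≤ s + h
      · rw [if_pos hmem, if_pos ⟨by linarith [hmem.1], by linarith [hmem.2]⟩, mul_one]
      · rw [if_neg hmem, if_neg (by intro hc; exact hmem ⟨by linarith [hc.1], by linarith [hc.2]⟩),
          mul_zero]
    rw [hB_def]
    simp only []
    rw [e1, integral_indicator measurableSet_Icc, integral_Icc_eq_integral_Ioc,
      ← intervalIntegral.integral_of_le (by linarith : s - h ≤ s + h),
      ← intervalIntegral.integral_interval_sub_left hfint.intervalIntegrable
        hfint.intervalIntegrable]
  have hBcont : Continuous B := by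
    have hprim : Continuous (fun b => ∫ u in (0:ℝ)..b, f u) :=
      intervalIntegral.continuous_primitive (fun a b => hfint.intervalIntegrable) 0
    have : Continuous fun s => (∫ u in (0:ℝ)..(s + h), f u) - ∫ u in (0:ℝ)..(s - h), f u :=
      (hprim.comp (continuous_id.add continuous_const)).sub
        (hprim.comp (continuous_id.sub continuous_const))
    exact (continuous_congr (fun s => (hBeq s).symm)).mp this
  set C1 : ℝ := ∫ y, |f y| with hC1_def
  have hBbound : ∀ s, |B s| ≤ C1 := by
    intro s
    rw [hB_def]
    have hslice : Integrable (fun y => f y * I y s) := by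
      have e2 : (fun y => f y * I y s) = (Set.Icc (s - h) (s + h)).indicator f := by
        funext y
        rw [hI_def]
        simp only [Set.indicator_apply, Set.mem_Icc]
        by_cases hmem : s - h ≤ y ∧ y ≤ s + h
        · rw [if_pos hmem, if_pos ⟨by linarith [hmem.1], by linarith [hmem.2]⟩, mul_one]
        · rw [if_neg hmem, if_neg (by intro hc; exact hmem ⟨by linarith [hc.1], by linarith [hc.2]⟩),
            mul_zero]
      rw [e2]
      exact hfint.indicator measurableSet_Icc
    calc |∫ y, f y * I y s| ≤ ∫ y, |f y * I y s| := by
          simpa only [Real.norm_eq_abs] using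
            norm_integral_le_integral_norm (μ := volume) (fun y => f y * I y s)
      _ ≤ ∫ y, |f y| := by
          apply integral_mono hslice.abs hfint.abs
          intro y
          show |f y * I y s| ≤ |f y|
          rw [abs_mul]
          calc |f y| * |I y s| ≤ |f y| * 1 :=
                mul_le_mul_of_nonneg_left (hIabs y s) (abs_nonneg _)
            _ = |f y| := mul_one _
      _ = C1 := rfl
  -- Swap 1 : for every x
  have key1 : ∀ x : ℝ, (∫ y, f y * max (t - |x - y|) 0) = ∫ s, I x s * B s := by
    intro x
    have hint1 : Integrable (fun p : ℝ × ℝ => f p.1 * (I x p.2 * I p.1 p.2))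
        (volume.prod volume) := by
      refine aux_integrable (a := -2) (b := 2) (c := x - 1) (d := x + 1) (C := C) ?_ ?_ ?_
      · apply Measurable.aestronglyMeasurable
        exact ((hf.measurable.comp measurable_fst).mul
          (((hImeas1 x).comp measurable_snd).mul hImeas2))
      · rintro ⟨y, s⟩ hne
        simp only [ne_eq, mul_eq_zero, not_or] at hne
        have h1 := hfs y hne.1
        have h2 := hImem x s hne.2.1
        rw [Set.mem_prod]
        constructor
        · rw [Set.mem_Icc]
          constructor <;> [linarith [abs_le.1 (le_of_lt h1) |>.1];
            linarith [abs_le.1 (le_of_lt h1) |>.2]]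
        · rw [Set.mem_Icc]
          rcases abs_le.1 h2 with ⟨l1, l2⟩
          constructor <;> linarith
      · rintro ⟨y, s⟩
        simp only
        rw [abs_mul, abs_mul]
        calc |f y| * (|I x s| * |I y s|) ≤ C * (1 * 1) := by
              apply mul_le_mul (hC' y) _ (by positivity) (le_trans (abs_nonneg _) (hC' y))
              exact mul_le_mul (hIabs x s) (hIabs y s) (abs_nonneg _) zero_le_one
          _ = C := by ring
    calc (∫ y, f y * max (t - |x - y|) 0)
        = ∫ y, f y * ∫ s, I x s * I y s := by
          congr 1; funext y
          congr 1
          rw [hI_def]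
          simp only []
          rw [lem_chi h hh0 x y]
          congr 1
          rw [hh_def]; ring
      _ = ∫ y, ∫ s, f y * (I x s * I y s) := by
          congr 1; funext y
          rw [integral_const_mul]
      _ = ∫ s, ∫ y, f y * (I x s * I y s) := integral_integral_swap hint1
      _ = ∫ s, I x s * B s := by
          congr 1; funext s
          rw [hB_def]
          simp only []
          rw [← integral_const_mul]
          congr 1; funext y; ring
  -- Swap 2
  have hint2 : Integrable (fun p : ℝ × ℝ => f p.1 * (I p.1 p.2 * B p.2))
      (volume.prod volume) := by
    refine aux_integrable (a := -2) (b := 2) (c := -2) (d := 2) (C := C * C1) ?_ ?_ ?_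
    · apply Measurable.aestronglyMeasurable
      exact (hf.measurable.comp measurable_fst).mul
        (hImeas2.mul (hBcont.measurable.comp measurable_snd))
    · rintro ⟨x, s⟩ hne
      simp only [ne_eq, mul_eq_zero, not_or] at hne
      have h1 := hfs x hne.1
      have h2 := hImem x s hne.2.1
      rw [Set.mem_prod]
      rcases abs_le.1 (le_of_lt h1) with ⟨l1, l2⟩
      rcases abs_le.1 h2 with ⟨l3, l4⟩
      constructor <;> rw [Set.mem_Icc] <;> constructor <;> linarith
    · rintro ⟨x, s⟩
      simp only
      rw [abs_mul, abs_mul]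
      have hC10 : 0 ≤ C1 := le_trans (abs_nonneg _) (hBbound 0)
      calc |f x| * (|I x s| * |B s|) ≤ C * (1 * C1) := by
            apply mul_le_mul (hC' x) _ (by positivity) (le_trans (abs_nonneg _) (hC' x))
            exact mul_le_mul (hIabs x s) (hBbound s) (abs_nonneg _) zero_le_one
        _ = C * C1 := by ring
  have key2 : (∫ x, ∫ y, f x * f y * max (t - |x - y|) 0) = ∫ s, B s * B s := by
    calc (∫ x, ∫ y, f x * f y * max (t - |x - y|) 0)
        = ∫ x, f x * ∫ y, f y * max (t - |x - y|) 0 := by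
          congr 1; funext x
          rw [← integral_const_mul]
          congr 1; funext y; ring
      _ = ∫ x, f x * ∫ s, I x s * B s := by
          congr 1; funext x
          rw [key1 x]
      _ = ∫ x, ∫ s, f x * (I x s * B s) := by
          congr 1; funext x
          rw [integral_const_mul]
      _ = ∫ s, ∫ x, f x * (I x s * B s) := integral_integral_swap hint2
      _ = ∫ s, B s * B s := by
          congr 1; funext s
          have : (fun x => f x * (I x s * B s)) = fun x => (f x * I x s) * B s := by
            funext x; ring
          rw [this, integral_mul_const]
  rw [key2]
  exact integral_nonneg fun s => mul_self_nonneg (B s)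




lemma lem_main (f : ℝ → ℝ) (hf : Continuous f)
    (hsupp : tsupport f ⊆ Metric.ball (0 : ℝ) (1/2)) :
    0 ≤ ∫ x : ℝ, ∫ y : ℝ, f x * f y * Real.log (1 / |x - y|) := by
  set μ₂ : Measure (ℝ × ℝ) := (volume : Measure ℝ).prod (volume : Measure ℝ) with hμ₂
  set σ : Measure ℝ := volume.restrict (Set.Ioo 0 1) with hσ
  have hcs : HasCompactSupport f := by
    refine Metric.isCompact_of_isClosed_isBounded (isClosed_tsupport f) ?_
    exact Metric.isBounded_ball.subset hsupp
  have hfint : Integrable f := hf.integrable_of_hasCompactSupport hcs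
  obtain ⟨C, hC⟩ := hcs.exists_bound_of_continuous hf
  have hC' : ∀ x, |f x| ≤ C := fun x => by simpa [Real.norm_eq_abs] using hC x
  have hC0 : 0 ≤ C := le_trans (abs_nonneg _) (hC' 0)
  have hfs : ∀ x, f x ≠ 0 → |x| < 1/2 := by
    intro x hx
    have := hsupp (subset_tsupport f hx)
    simpa [Real.dist_eq] using Metric.mem_ball.1 this
  set C1 : ℝ := ∫ y, |f y| with hC1_def
  -- generic integrability of continuous kernels against f ⊗ f
  have hcont_int : ∀ g : ℝ → ℝ, Continuous g →
      Integrable (fun p : ℝ × ℝ => f p.1 * f p.2 * g (p.1 - p.2)) μ₂ := by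
    intro g hg
    rw [hμ₂, ← Measure.volume_eq_prod]
    apply Continuous.integrable_of_hasCompactSupport (by fun_prop)
    apply HasCompactSupport.intro (hcs.prod hcs)
    rintro ⟨x, y⟩ hp
    rw [Set.mem_prod, not_and_or] at hp
    rcases hp with hp | hp <;>
      simp [image_eq_zero_of_notMem_tsupport hp]
  have habs_int : ∀ g : ℝ → ℝ, Continuous g →
      Integrable (fun p : ℝ × ℝ => |f p.1| * (|f p.2| * g (p.1 - p.2))) μ₂ := by
    intro g hg
    rw [hμ₂, ← Measure.volume_eq_prod]
    apply Continuous.integrable_of_hasCompactSupport (by fun_prop)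
    apply HasCompactSupport.intro (hcs.prod hcs)
    rintro ⟨x, y⟩ hp
    rw [Set.mem_prod, not_and_or] at hp
    rcases hp with hp | hp <;>
      simp [image_eq_zero_of_notMem_tsupport hp]
  -- the kernel family
  set Ψ : ℝ × ℝ → ℝ → ℝ := fun p t => f p.1 * f p.2 * (max (t - |p.1 - p.2|) 0 / t ^ 2)
    with hΨ_def
  have hΨmeas : AEStronglyMeasurable (uncurry Ψ) (μ₂.prod σ) := by
    apply Measurable.aestronglyMeasurable
    apply Measurable.mul
    · exact ((hf.measurable.comp (measurable_fst.comp measurable_fst)).mul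
        (hf.measurable.comp (measurable_snd.comp measurable_fst)))
    · apply Measurable.div
      · apply Measurable.max _ measurable_const
        apply Measurable.sub measurable_snd
        exact ((measurable_fst.comp measurable_fst).sub
          (measurable_snd.comp measurable_fst)).abs
      · exact (measurable_snd.pow measurable_const)
  -- slicewise integrability in t
  have hslice : ∀ t : ℝ, Integrable (fun p : ℝ × ℝ => uncurry Ψ (p, t)) μ₂ := by
    intro t
    have := (hcont_int (fun u => max (t - |u|) 0) (by fun_prop)).div_const (t ^ 2)
    apply this.congr
    apply Filter.Eventually.of_forall
    intro p
    simp only [uncurry, hΨ_def]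
    rw [mul_div_assoc]
  -- bound for the norm integral
  have hGbound : ∀ t : ℝ, 0 < t → (∫ p, ‖uncurry Ψ (p, t)‖ ∂μ₂) ≤ C * C1 := by
    intro t ht
    have habs : ∀ p : ℝ × ℝ, ‖uncurry Ψ (p, t)‖ =
        |f p.1| * (|f p.2| * (max (t - |p.1 - p.2|) 0 / t ^ 2)) := by
      intro p
      simp only [uncurry, hΨ_def, Real.norm_eq_abs]
      rw [abs_mul, abs_mul, abs_of_nonneg (div_nonneg (le_max_right _ _) (sq_nonneg t))]
      ring
    have hGint : Integrable (fun p : ℝ × ℝ =>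
        |f p.1| * (|f p.2| * (max (t - |p.1 - p.2|) 0 / t ^ 2))) μ₂ :=
      habs_int (fun u => max (t - |u|) 0 / t ^ 2) (by fun_prop)
    calc (∫ p, ‖uncurry Ψ (p, t)‖ ∂μ₂)
        = ∫ p, |f p.1| * (|f p.2| * (max (t - |p.1 - p.2|) 0 / t ^ 2)) ∂μ₂ := by
          exact integral_congr_ae (Filter.Eventually.of_forall fun p => habs p)
      _ = ∫ x, ∫ y, |f x| * (|f y| * (max (t - |x - y|) 0 / t ^ 2)) := by
          rw [hμ₂, (integral_integral (f := fun x y =>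
            |f x| * (|f y| * (max (t - |x - y|) 0 / t ^ 2))) (by exact hGint))]
      _ ≤ ∫ x, C * |f x| := by
          apply integral_mono hGint.integral_prod_left (hfint.abs.const_mul C)
          intro x
          simp only []
          rw [integral_const_mul]
          have hub : (∫ y, |f y| * (max (t - |x - y|) 0 / t ^ 2)) ≤ C := by
            have hint1 : Integrable (fun y => |f y| * (max (t - |x - y|) 0 / t ^ 2)) := by
              apply Continuous.integrable_of_hasCompactSupport (by fun_prop)
              exact HasCompactSupport.intro hcs fun y hy => by
                simp [image_eq_zero_of_notMem_tsupport hy]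
            have hint2 : Integrable (fun y => C * (max (t - |x - y|) 0 / t ^ 2)) := by
              apply Continuous.integrable_of_hasCompactSupport (by fun_prop)
              apply HasCompactSupport.intro (isCompact_Icc (a := x - t) (b := x + t))
              intro y hy
              rw [Set.mem_Icc, not_and_or] at hy
              have : max (t - |x - y|) 0 = 0 := by
                apply max_eq_right
                rcases hy with hy | hy <;> push_neg at hy <;>
                  rcases abs_cases (x - y) with ⟨he, _⟩ | ⟨he, _⟩ <;> linarith
              simp [this]
            have hle : ∀ y, |f y| * (max (t - |x - y|) 0 / t ^ 2) ≤
                C * (max (t - |x - y|) 0 / t ^ 2) := fun y =>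
              mul_le_mul_of_nonneg_right (hC' y)
                (div_nonneg (le_max_right _ _) (sq_nonneg t))
            calc (∫ y, |f y| * (max (t - |x - y|) 0 / t ^ 2))
                ≤ ∫ y, C * (max (t - |x - y|) 0 / t ^ 2) := integral_mono hint1 hint2 hle
              _ = C := by
                  rw [integral_const_mul, integral_div, lem_Tint' t x ht.le,
                    div_self (by positivity : (t:ℝ) ^ 2 ≠ 0), mul_one]
          calc |f x| * (∫ y, |f y| * (max (t - |x - y|) 0 / t ^ 2)) ≤ |f x| * C :=
                mul_le_mul_of_nonneg_left hub (abs_nonneg _)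
            _ = C * |f x| := mul_comm _ _
      _ = C * C1 := by rw [integral_const_mul]
  -- measurability of the norm-integral in t
  have hnormmeas : AEStronglyMeasurable (fun t => ∫ p, ‖uncurry Ψ (p, t)‖ ∂μ₂) σ :=
    (hΨmeas.norm).prod_swap.integral_prod_right'
  have hnormint : Integrable (fun t => ∫ p, ‖uncurry Ψ (p, t)‖ ∂μ₂) σ := by
    have hconst : Integrable (fun _ : ℝ => C * C1) σ := by
      rw [hσ]
      exact integrableOn_const measure_Ioo_lt_top.ne
    apply hconst.mono' hnormmeas
    rw [hσ]
    filter_upwards [ae_restrict_mem measurableSet_Ioo] with t htt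
    rw [Real.norm_eq_abs, abs_of_nonneg (integral_nonneg fun p => norm_nonneg _)]
    exact hGbound t htt.1
  have hΨint : Integrable (uncurry Ψ) (μ₂.prod σ) := by
    rw [integrable_prod_iff' hΨmeas]
    exact ⟨Filter.Eventually.of_forall fun t => hslice t, hnormint⟩
  -- the two kernel components
  have hR1int : Integrable (fun p : ℝ × ℝ =>
      f p.1 * f p.2 * ∫ t in Set.Ioo (0:ℝ) 1, max (t - |p.1 - p.2|) 0 / t ^ 2) μ₂ := by
    apply (hΨint.integral_prod_left).congr
    apply Filter.Eventually.of_forall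
    intro p
    show (∫ t, uncurry Ψ (p, t) ∂σ) = _
    rw [hσ, hΨ_def]
    simp only [uncurry]
    rw [integral_const_mul]
  have hR2int : Integrable (fun p : ℝ × ℝ => f p.1 * f p.2 * max (1 - |p.1 - p.2|) 0) μ₂ :=
    hcont_int (fun u => max (1 - |u|) 0) (by fun_prop)
  have hslice2 : ∀ x : ℝ, Integrable (fun y => f x * f y * max (1 - |x - y|) 0) := by
    intro x
    apply Continuous.integrable_of_hasCompactSupport (by fun_prop)
    exact HasCompactSupport.intro hcs fun y hy => by
      simp [image_eq_zero_of_notMem_tsupport hy]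
  -- inner congruence
  have hinner : ∀ x : ℝ, (∫ y, f x * f y * Real.log (1 / |x - y|)) =
      ∫ y, (f x * f y * (∫ t in Set.Ioo (0:ℝ) 1, max (t - |x - y|) 0 / t ^ 2)
        + f x * f y * max (1 - |x - y|) 0) := by
    intro x
    apply integral_congr_ae
    have hae : ∀ᵐ y : ℝ, y ≠ x := by
      rw [ae_iff]
      simp only [ne_eq, not_not, Set.setOf_eq_eq_singleton]
      exact measure_singleton x
    filter_upwards [hae] with y hy
    by_cases hx0 : f x = 0
    · simp [hx0]
    by_cases hy0 : f y = 0
    · simp [hy0]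
    have hb1 := hfs x hx0
    have hb2 := hfs y hy0
    have h1 : |x - y| < 1 := by
      calc |x - y| = |x + -y| := by rw [sub_eq_add_neg]
        _ ≤ |x| + |-y| := abs_add_le _ _
        _ = |x| + |y| := by rw [abs_neg]
        _ < 1 := by linarith
    have h0 : x - y ≠ 0 := sub_ne_zero.2 (Ne.symm hy)
    rw [lem_W (x - y) h0 h1, mul_add]
  -- split the double integral
  have houter : (∫ x, ∫ y, f x * f y * Real.log (1 / |x - y|)) =
      (∫ x, ∫ y, f x * f y * (∫ t in Set.Ioo (0:ℝ) 1, max (t - |x - y|) 0 / t ^ 2))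
        + ∫ x, ∫ y, f x * f y * max (1 - |x - y|) 0 := by
    calc (∫ x, ∫ y, f x * f y * Real.log (1 / |x - y|))
        = ∫ x, ∫ y, (f x * f y * (∫ t in Set.Ioo (0:ℝ) 1, max (t - |x - y|) 0 / t ^ 2)
            + f x * f y * max (1 - |x - y|) 0) := by
          congr 1
          funext x
          exact hinner x
      _ = ∫ x, ((∫ y, f x * f y * (∫ t in Set.Ioo (0:ℝ) 1, max (t - |x - y|) 0 / t ^ 2))
            + ∫ y, f x * f y * max (1 - |x - y|) 0) := by
          apply integral_congr_ae
          filter_upwards [hR1int.prod_right_ae] with x hx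
          exact integral_add hx (hslice2 x)
      _ = _ := integral_add hR1int.integral_prod_left hR2int.integral_prod_left
  rw [houter]
  have hterm2 : 0 ≤ ∫ x, ∫ y, f x * f y * max (1 - |x - y|) 0 :=
    lem_step2 f hf hsupp 1 one_pos le_rfl
  have hterm1 : 0 ≤ ∫ x, ∫ y, f x * f y *
      ∫ t in Set.Ioo (0:ℝ) 1, max (t - |x - y|) 0 / t ^ 2 := by
    rw [integral_integral (f := fun x y => f x * f y *
      ∫ t in Set.Ioo (0:ℝ) 1, max (t - |x - y|) 0 / t ^ 2) hR1int]
    have e1 : (∫ z : ℝ × ℝ, f z.1 * f z.2 *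
        (∫ t in Set.Ioo (0:ℝ) 1, max (t - |z.1 - z.2|) 0 / t ^ 2) ∂μ₂)
        = ∫ p, ∫ t, Ψ p t ∂σ ∂μ₂ := by
      apply integral_congr_ae
      apply Filter.Eventually.of_forall
      intro p
      show _ = ∫ t, uncurry Ψ (p, t) ∂σ
      rw [hσ, hΨ_def]
      simp only [uncurry]
      rw [integral_const_mul]
    rw [e1, integral_integral_swap hΨint]
    apply integral_nonneg_of_ae
    rw [hσ]
    filter_upwards [ae_restrict_mem measurableSet_Ioo] with t htt
    have e2 : (∫ p, Ψ p t ∂μ₂)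
        = (∫ p, f p.1 * f p.2 * max (t - |p.1 - p.2|) 0 ∂μ₂) / t ^ 2 := by
      rw [← integral_div]
      congr 1
      funext p
      rw [hΨ_def]
      simp only []
      rw [mul_div_assoc]
    rw [e2]
    apply div_nonneg _ (sq_nonneg t)
    rw [← integral_integral (f := fun x y => f x * f y * max (t - |x - y|) 0)
      (hcont_int (fun u => max (t - |u|) 0) (by fun_prop))]
    exact lem_step2 f hf hsupp t htt.1 htt.2.le
  exact add_nonneg hterm1 hterm2

/-- In dimension `d = 1` one may take `r_d = 1/2`: on `B(0, 1/2)` the kernel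
`log(1/|x-y|)` is nonnegative off the diagonal and positive definite, in the sense that
`∬ f(x) f(y) log(1/|x-y|) dx dy ≥ 0` for every continuous `f` supported in `B(0, 1/2)`. -/
theorem stmt14 :
    ∃ r : ℝ, 0 < r ∧ r = 1 / 2 ∧
      (∀ x y : ℝ, x ∈ Metric.ball (0 : ℝ) r → y ∈ Metric.ball (0 : ℝ) r → x ≠ y →
        0 ≤ Real.log (1 / |x - y|)) ∧
      (∀ f : ℝ → ℝ, Continuous f → tsupport f ⊆ Metric.ball (0 : ℝ) r →
        0 ≤ ∫ x : ℝ, ∫ y : ℝ, f x * f y * Real.log (1 / |x - y|)) := by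
  refine ⟨1/2, by norm_num, rfl, ?_, ?_⟩
  · intro x y hx hy hxy
    apply Real.log_nonneg
    have hx' : |x| < 1/2 := by simpa [Real.dist_eq] using Metric.mem_ball.1 hx
    have hy' : |y| < 1/2 := by simpa [Real.dist_eq] using Metric.mem_ball.1 hy
    have h1 : |x - y| < 1 := by
      calc |x - y| = |x + -y| := by rw [sub_eq_add_neg]
        _ ≤ |x| + |-y| := abs_add_le _ _
        _ = |x| + |y| := by rw [abs_neg]
        _ < 1 := by linarith
    have h0 : 0 < |x - y| := abs_pos.2 (sub_ne_zero.2 hxy)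
    rw [le_div_iff₀ h0, one_mul]
    exact h1.le
  · intro f hf hsupp
    exact lem_main f hf hsupp
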